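/- For all f ∈ H^s, all integers k ≠ 0, and all 1 ≤ j ≤ s: |I_k(f) − I_k(p_{f,j})| ≤ ‖f‖_{H^s}/(2π|k|)^j, where p_{f,j}(x) = ∑_{m=0}^{j−1}(f^{(m)}(1)−f^{(m)}(0))B*_{m+1}(x) is the Bernoulli periodization and I_k(p_{f,j}) = −∑_{ℓ=0}^{j−1}(f^{(ℓ)}(1)−f^{(ℓ)}(0))/(2πik)^{ℓ+1}. -/

import Mathlib

open MeasureTheory Real Complex

noncomputable section

/-- The oscillatory integral `I_k(f) = ∫₀¹ f(x) e^{-2πikx} dx`. -/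
def Ik (k : ℤ) (f : ℝ → ℂ) : ℂ :=
  ∫ x in (0:ℝ)..1, f x * Complex.exp (-(2 * Real.pi * Complex.I * (k : ℂ) * (x : ℂ)))

/-- The normalized Bernoulli polynomial `B*_ℓ = B_ℓ/ℓ!` as a function `ℝ → ℂ`. -/
def Bstar (ℓ : ℕ) (x : ℝ) : ℂ :=
  ((Polynomial.bernoulli ℓ).map (algebraMap ℚ ℂ)).eval (x : ℂ) / (Nat.factorial ℓ)

/-- The `Hˢ` inner product
`⟨f,g⟩_s = ∑_{ℓ<s} (∫₀¹ f⁽ℓ⁾)·conj(∫₀¹ g⁽ℓ⁾) + ∫₀¹ f⁽ˢ⁾ conj(g⁽ˢ⁾)`. -/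
def hsInner (s : ℕ) (f g : ℝ → ℂ) : ℂ :=
  (∑ ℓ ∈ Finset.range s,
    (∫ x in (0:ℝ)..1, iteratedDeriv ℓ f x) *
      (starRingEnd ℂ) (∫ x in (0:ℝ)..1, iteratedDeriv ℓ g x)) +
  ∫ x in (0:ℝ)..1, iteratedDeriv s f x * (starRingEnd ℂ) (iteratedDeriv s g x)

/-- The squared `Hˢ` norm. -/
def hsNormSq (s : ℕ) (f : ℝ → ℂ) : ℝ :=
  (∑ ℓ ∈ Finset.range s, ‖∫ x in (0:ℝ)..1, iteratedDeriv ℓ f x‖^2) +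
  ∫ x in (0:ℝ)..1, ‖iteratedDeriv s f x‖^2

/-- The Bernoulli periodization polynomial
`p_{f,j}(x) = ∑_{m<j} (f⁽ᵐ⁾(1) - f⁽ᵐ⁾(0)) B*_{m+1}(x)`. -/
def periodization (f : ℝ → ℂ) (j : ℕ) (x : ℝ) : ℂ :=
  ∑ m ∈ Finset.range j, (iteratedDeriv m f 1 - iteratedDeriv m f 0) * Bstar (m+1) x

/-! ### Auxiliary lemmas -/

/-- Abbreviation for `2πik`. -/
def cc (k : ℤ) : ℂ := 2 * Real.pi * Complex.I * (k : ℂ)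

lemma cc_ne {k : ℤ} (hk : k ≠ 0) : cc k ≠ 0 := by
  unfold cc
  refine mul_ne_zero (mul_ne_zero (mul_ne_zero two_ne_zero ?_) Complex.I_ne_zero) ?_
  · exact_mod_cast Real.pi_ne_zero
  · exact_mod_cast hk

lemma norm_cc (k : ℤ) : ‖cc k‖ = 2 * Real.pi * |(k : ℝ)| := by
  unfold cc
  rw [norm_mul, norm_mul, norm_mul]
  simp [Real.pi_nonneg, abs_of_nonneg, Complex.norm_intCast]

lemma e_exp_deriv (k : ℤ) (x : ℝ) :
    HasDerivAt (fun y : ℝ => Complex.exp (-(cc k * (y : ℂ))))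
      (-cc k * Complex.exp (-(cc k * (x : ℂ)))) x := by
  have h1 : HasDerivAt (fun y : ℝ => -(cc k * (y : ℂ))) (-cc k) x := by
    have := ((hasDerivAt_id ((x : ℝ) : ℂ)).const_mul (cc k)).comp_ofReal (z := x)
    simpa using this.fun_neg
  simpa [mul_comm] using h1.cexp

lemma e_one (k : ℤ) : Complex.exp (-(cc k * (1 : ℝ))) = 1 := by
  unfold cc
  rw [show -(2 * (Real.pi:ℂ) * Complex.I * (k:ℂ) * ((1:ℝ):ℂ)) = (-k : ℤ) * (2 * Real.pi * Complex.I) by push_cast; ring]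
  exact Complex.exp_int_mul_two_pi_mul_I _

lemma Ik_eq (k : ℤ) (f : ℝ → ℂ) :
    Ik k f = ∫ x in (0:ℝ)..1, f x * Complex.exp (-(cc k * (x : ℂ))) := rfl

lemma e_cont (k : ℤ) : Continuous (fun x : ℝ => Complex.exp (-(cc k * (x : ℂ)))) := by
  fun_prop

lemma norm_e (k : ℤ) (x : ℝ) : ‖Complex.exp (-(cc k * (x : ℂ)))‖ = 1 := by
  have h : -(cc k * (x:ℂ)) = ((-(2 * Real.pi * (k:ℝ) * x) : ℝ) : ℂ) * Complex.I := by
    unfold cc; push_cast; ring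
  rw [h, Complex.norm_exp_ofReal_mul_I]

lemma ibp {k : ℤ} (hk : k ≠ 0) (g g' : ℝ → ℂ) (hg : ∀ x, HasDerivAt g (g' x) x)
    (hc' : Continuous g') :
    Ik k g = (Ik k g' - (g 1 - g 0)) / cc k := by
  have hgc : Continuous g := by
    have : Differentiable ℝ g := fun x => (hg x).differentiableAt
    exact this.continuous
  have hF : ∀ x ∈ Set.uIcc (0:ℝ) 1, HasDerivAt (fun y : ℝ => g y * Complex.exp (-(cc k * (y : ℂ))))
      (g' x * Complex.exp (-(cc k * (x : ℂ))) - cc k * (g x * Complex.exp (-(cc k * (x : ℂ))))) x := by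
    intro x _
    have := (hg x).fun_mul (e_exp_deriv k x)
    refine this.congr_deriv ?_
    ring
  have hint : IntervalIntegrable (fun x : ℝ => g' x * Complex.exp (-(cc k * (x : ℂ)))
      - cc k * (g x * Complex.exp (-(cc k * (x : ℂ))))) volume 0 1 := by
    apply Continuous.intervalIntegrable
    fun_prop
  have key := intervalIntegral.integral_eq_sub_of_hasDerivAt hF hint
  rw [intervalIntegral.integral_sub ((hc'.fun_mul (e_cont k)).intervalIntegrable 0 1)
      (((continuous_const.fun_mul (hgc.fun_mul (e_cont k)))).intervalIntegrable 0 1),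
    intervalIntegral.integral_const_mul] at key
  have h0 : Complex.exp (-(cc k * ((0:ℝ) : ℂ))) = 1 := by norm_num
  rw [← Ik_eq, ← Ik_eq] at key
  rw [e_one k] at key
  rw [h0] at key
  simp only [mul_one] at key
  field_simp [cc_ne hk]
  linear_combination -key

lemma iterate_ibp {k : ℤ} (hk : k ≠ 0) (n : ℕ) (f : ℝ → ℂ) (hf : ContDiff ℝ n f) :
    Ik k f = -(∑ ℓ ∈ Finset.range n,
        (iteratedDeriv ℓ f 1 - iteratedDeriv ℓ f 0) / cc k ^ (ℓ+1))
      + Ik k (iteratedDeriv n f) / cc k ^ n := by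
  induction n with
  | zero => simp [iteratedDeriv_zero]
  | succ n ih =>
    have hfn : ContDiff ℝ n f := hf.of_le (by exact_mod_cast Nat.le_succ n)
    have hdiff : ∀ x, HasDerivAt (iteratedDeriv n f) (iteratedDeriv (n+1) f x) x := by
      intro x
      rw [iteratedDeriv_succ]
      have : Differentiable ℝ (iteratedDeriv n f) :=
        hf.differentiable_iteratedDeriv n (by exact_mod_cast Nat.lt_succ_self n)
      exact (this x).hasDerivAt
    have hcont : Continuous (iteratedDeriv (n+1) f) :=
      hf.continuous_iteratedDeriv (n+1) (by exact_mod_cast le_refl (n+1))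
    have step := ibp hk (iteratedDeriv n f) (iteratedDeriv (n+1) f) hdiff hcont
    rw [ih hfn, step, Finset.sum_range_succ]
    have h1 : cc k ≠ 0 := cc_ne hk
    field_simp
    ring

lemma Bstar_cont (n : ℕ) : Continuous (Bstar n) := by
  unfold Bstar
  fun_prop

lemma Bstar_hasDerivAt (n : ℕ) (x : ℝ) : HasDerivAt (Bstar (n+1)) (Bstar n x) x := by
  have h1 : HasDerivAt (fun z : ℂ => ((Polynomial.bernoulli (n+1)).map (algebraMap ℚ ℂ)).eval z)
      ((Polynomial.derivative ((Polynomial.bernoulli (n+1)).map (algebraMap ℚ ℂ))).eval ((x:ℝ):ℂ)) ((x:ℝ):ℂ) :=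
    Polynomial.hasDerivAt _ _
  have h2 := (h1.comp_ofReal (z := x)).div_const ((Nat.factorial (n+1)) : ℂ)
  have h3 : (Polynomial.derivative ((Polynomial.bernoulli (n+1)).map (algebraMap ℚ ℂ))).eval ((x:ℝ):ℂ)
      = (n+1 : ℂ) * ((Polynomial.bernoulli n).map (algebraMap ℚ ℂ)).eval ((x:ℝ):ℂ) := by
    rw [Polynomial.derivative_map, Polynomial.derivative_bernoulli_add_one]
    simp [Polynomial.eval_mul]
  rw [h3] at h2
  have h4 : (n+1 : ℂ) * ((Polynomial.bernoulli n).map (algebraMap ℚ ℂ)).eval ((x:ℝ):ℂ) / ((Nat.factorial (n+1)) : ℂ)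
      = Bstar n x := by
    unfold Bstar
    rw [Nat.factorial_succ]
    have hfac : ((Nat.factorial n : ℂ)) ≠ 0 := by exact_mod_cast Nat.factorial_ne_zero n
    have : ((n:ℂ)+1) ≠ 0 := Nat.cast_add_one_ne_zero n
    push_cast
    field_simp
  exact h4 ▸ h2

lemma Bstar_zero_eq (x : ℝ) : Bstar 0 x = 1 := by
  unfold Bstar
  simp

lemma Bstar_diff (n : ℕ) : Bstar (n+1) 1 - Bstar (n+1) 0 = if n = 0 then 1 else 0 := by
  unfold Bstar
  rw [div_sub_div_same]
  have h1 : (((Polynomial.bernoulli (n+1)).map (algebraMap ℚ ℂ)).eval (((1:ℝ)):ℂ))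
      = ((Polynomial.bernoulli (n+1)).eval 1 : ℚ) := by
    rw [show (((1:ℝ)):ℂ) = algebraMap ℚ ℂ 1 by norm_num]
    rw [Polynomial.eval_map, Polynomial.eval₂_at_apply]
    norm_num
  have h0 : (((Polynomial.bernoulli (n+1)).map (algebraMap ℚ ℂ)).eval (((0:ℝ)):ℂ))
      = ((Polynomial.bernoulli (n+1)).eval 0 : ℚ) := by
    rw [show (((0:ℝ)):ℂ) = algebraMap ℚ ℂ 0 by norm_num]
    rw [Polynomial.eval_map, Polynomial.eval₂_at_apply]
    norm_num
  rw [h1, h0, Polynomial.bernoulli_eval_one, Polynomial.bernoulli_eval_zero]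
  rcases Nat.eq_zero_or_pos n with hn | hn
  · subst hn
    norm_num [bernoulli'_one, bernoulli_one]
  · have hne : n + 1 ≠ 1 := by omega
    rw [if_neg (by omega : ¬ n = 0)]
    rw [← bernoulli_eq_bernoulli'_of_ne_one hne]
    simp

lemma Ik_const_one {k : ℤ} (hk : k ≠ 0) : Ik k (fun _ => 1) = 0 := by
  have hF : ∀ x ∈ Set.uIcc (0:ℝ) 1,
      HasDerivAt (fun y : ℝ => Complex.exp (-(cc k * (y:ℂ))) / (-cc k))
        ((1:ℂ) * Complex.exp (-(cc k * (x:ℂ)))) x := by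
    intro x _
    have := (e_exp_deriv k x).div_const (-cc k)
    refine this.congr_deriv ?_
    rw [neg_mul, neg_div_neg_eq, mul_div_cancel_left₀ _ (cc_ne hk), one_mul]
  have hint : IntervalIntegrable (fun x : ℝ => (1:ℂ) * Complex.exp (-(cc k * (x:ℂ)))) volume 0 1 := by
    apply Continuous.intervalIntegrable; fun_prop
  have key := intervalIntegral.integral_eq_sub_of_hasDerivAt hF hint
  have heq : Ik k (fun _ => 1) = ∫ x in (0:ℝ)..1, (1:ℂ) * Complex.exp (-(cc k * (x:ℂ))) := rfl
  rw [heq, key, e_one k]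
  norm_num

lemma Ik_Bstar {k : ℤ} (hk : k ≠ 0) (m : ℕ) : Ik k (Bstar (m+1)) = -(1 / cc k ^ (m+1)) := by
  induction m with
  | zero =>
    have step := ibp hk (Bstar 1) (Bstar 0) (Bstar_hasDerivAt 0) (Bstar_cont 0)
    have h0 : Ik k (Bstar 0) = 0 := by
      rw [show Bstar 0 = fun _ => (1:ℂ) by funext x; exact Bstar_zero_eq x]
      exact Ik_const_one hk
    rw [step, h0]
    have hd := Bstar_diff 0
    rw [if_pos rfl] at hd
    rw [hd]
    field_simp
    ring
  | succ m ih =>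
    have step := ibp hk (Bstar (m+2)) (Bstar (m+1)) (Bstar_hasDerivAt (m+1)) (Bstar_cont (m+1))
    have hd := Bstar_diff (m+1)
    rw [if_neg (Nat.succ_ne_zero m)] at hd
    rw [step, hd, ih]
    have h1 : cc k ≠ 0 := cc_ne hk
    field_simp
    ring

lemma key_l2 (g : ℝ → ℂ) (hg : Continuous g) :
    (∫ x in (0:ℝ)..1, ‖g x‖) ≤ Real.sqrt (∫ x in (0:ℝ)..1, ‖g x‖^2) := by
  set A := ∫ x in (0:ℝ)..1, ‖g x‖^2 with hA
  have hA0 : 0 ≤ A := intervalIntegral.integral_nonneg (by norm_num) (fun x _ => sq_nonneg _)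
  have hint1 : IntervalIntegrable (fun x => ‖g x‖) volume 0 1 := (hg.norm).intervalIntegrable 0 1
  have key : ∀ t : ℝ, 0 < t → (∫ x in (0:ℝ)..1, ‖g x‖) ≤ (t^2 + A)/(2*t) := by
    intro t ht
    have hle : ∀ x ∈ Set.Icc (0:ℝ) 1, ‖g x‖ ≤ (t^2 + ‖g x‖^2)/(2*t) := by
      intro x _
      rw [le_div_iff₀ (by positivity)]
      nlinarith [sq_nonneg (‖g x‖ - t)]
    have hint2 : IntervalIntegrable (fun x => (t^2 + ‖g x‖^2)/(2*t)) volume 0 1 := by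
      apply Continuous.intervalIntegrable; fun_prop
    have hmono := intervalIntegral.integral_mono_on (by norm_num : (0:ℝ) ≤ 1) hint1 hint2 hle
    calc (∫ x in (0:ℝ)..1, ‖g x‖) ≤ ∫ x in (0:ℝ)..1, (t^2 + ‖g x‖^2)/(2*t) := hmono
      _ = (t^2 + A)/(2*t) := by
          simp only [div_eq_mul_inv]
          rw [intervalIntegral.integral_mul_const, intervalIntegral.integral_add
            (by apply Continuous.intervalIntegrable; fun_prop)
            ((hg.norm.fun_pow 2).intervalIntegrable 0 1)]
          rw [intervalIntegral.integral_const]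
          norm_num
          left
          simp [hA]
  rcases eq_or_lt_of_le hA0 with h0 | hpos
  · rw [← h0, Real.sqrt_zero]
    have hsmall : ∀ ε : ℝ, 0 < ε → (∫ x in (0:ℝ)..1, ‖g x‖) ≤ 0 + ε := by
      intro ε hε
      have hk := key ε hε
      rw [← h0] at hk
      calc (∫ x in (0:ℝ)..1, ‖g x‖) ≤ (ε^2 + 0)/(2*ε) := hk
        _ = ε/2 := by field_simp; ring
        _ ≤ 0 + ε := by linarith
    exact le_of_forall_pos_le_add hsmall
  · have hst : 0 < Real.sqrt A := Real.sqrt_pos.mpr hpos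
    have hk := key (Real.sqrt A) hst
    calc (∫ x in (0:ℝ)..1, ‖g x‖) ≤ ((Real.sqrt A)^2 + A)/(2*Real.sqrt A) := hk
      _ = Real.sqrt A := by
          rw [Real.sq_sqrt hA0]
          rw [div_eq_iff (by positivity : (2 * Real.sqrt A) ≠ 0)]
          nlinarith [Real.sq_sqrt hA0]

lemma geom_bound (r : ℝ) (hr0 : 0 ≤ r) (hr : r ≤ 1/2) (j s : ℕ) (hjs : j ≤ s) :
    (∑ ℓ ∈ Finset.Ico j s, r^(ℓ+1)) + r^s ≤ r^j := by
  induction s, hjs using Nat.le_induction with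
  | base => simp
  | succ s hjs ih =>
    rw [Finset.sum_Ico_succ_top hjs]
    have h1 : r^(s+1) ≤ r^s * (1/2) := by
      rw [pow_succ]
      exact mul_le_mul_of_nonneg_left hr (pow_nonneg hr0 s)
    have h2 : 0 ≤ r^s := pow_nonneg hr0 s
    linarith

lemma Ik_periodization {k : ℤ} (hk : k ≠ 0) (f : ℝ → ℂ) (j : ℕ) :
    Ik k (periodization f j) = -∑ ℓ ∈ Finset.range j,
      (iteratedDeriv ℓ f 1 - iteratedDeriv ℓ f 0) / cc k ^ (ℓ+1) := by
  have h1 : Ik k (periodization f j)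
      = ∑ m ∈ Finset.range j, ∫ x in (0:ℝ)..1,
          (iteratedDeriv m f 1 - iteratedDeriv m f 0) *
            (Bstar (m+1) x * Complex.exp (-(cc k * (x:ℂ)))) := by
    rw [Ik_eq]
    rw [← intervalIntegral.integral_finset_sum (fun m _ => by
      apply Continuous.intervalIntegrable
      exact continuous_const.mul ((Bstar_cont (m+1)).mul (e_cont k)))]
    apply intervalIntegral.integral_congr
    intro x _
    dsimp only
    unfold periodization
    rw [Finset.sum_mul]
    exact Finset.sum_congr rfl (fun m _ => by ring)
  rw [h1]
  rw [← Finset.sum_neg_distrib]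
  apply Finset.sum_congr rfl
  intro m _
  rw [intervalIntegral.integral_const_mul, ← Ik_eq, Ik_Bstar hk m]
  ring

lemma delta_eq {s : ℕ} (f : ℝ → ℂ) (hf : ContDiff ℝ s f) (ℓ : ℕ) (hl : ℓ + 1 ≤ s) :
    iteratedDeriv ℓ f 1 - iteratedDeriv ℓ f 0
      = ∫ x in (0:ℝ)..1, iteratedDeriv (ℓ+1) f x := by
  symm
  apply intervalIntegral.integral_eq_sub_of_hasDerivAt
  · intro x _
    rw [iteratedDeriv_succ]
    exact ((hf.differentiable_iteratedDeriv ℓ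
      (by exact_mod_cast Nat.lt_of_lt_of_le (Nat.lt_succ_self ℓ) hl)) x).hasDerivAt
  · exact (hf.continuous_iteratedDeriv (ℓ+1) (by exact_mod_cast hl)).intervalIntegrable 0 1

lemma int_deriv_bound {s : ℕ} (f : ℝ → ℂ) (hf : ContDiff ℝ s f) (t : ℕ) (ht : t ≤ s) :
    ‖∫ x in (0:ℝ)..1, iteratedDeriv t f x‖ ≤ Real.sqrt (hsNormSq s f) := by
  have hsum0 : 0 ≤ ∑ ℓ ∈ Finset.range s, ‖∫ x in (0:ℝ)..1, iteratedDeriv ℓ f x‖^2 :=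
    Finset.sum_nonneg (fun i _ => sq_nonneg _)
  have hint0 : 0 ≤ ∫ x in (0:ℝ)..1, ‖iteratedDeriv s f x‖^2 :=
    intervalIntegral.integral_nonneg (by norm_num) (fun x _ => sq_nonneg _)
  rcases lt_or_eq_of_le ht with hlt | heq
  · have hterm : ‖∫ x in (0:ℝ)..1, iteratedDeriv t f x‖^2 ≤ hsNormSq s f := by
      unfold hsNormSq
      have := Finset.single_le_sum
        (f := fun ℓ => ‖∫ x in (0:ℝ)..1, iteratedDeriv ℓ f x‖^2)
        (fun i _ => sq_nonneg _) (Finset.mem_range.mpr hlt)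
      linarith
    calc ‖∫ x in (0:ℝ)..1, iteratedDeriv t f x‖
        = Real.sqrt (‖∫ x in (0:ℝ)..1, iteratedDeriv t f x‖^2) :=
          (Real.sqrt_sq (norm_nonneg _)).symm
      _ ≤ Real.sqrt (hsNormSq s f) := Real.sqrt_le_sqrt hterm
  · subst heq
    have h1 : ‖∫ x in (0:ℝ)..1, iteratedDeriv t f x‖
        ≤ ∫ x in (0:ℝ)..1, ‖iteratedDeriv t f x‖ :=
      intervalIntegral.norm_integral_le_integral_norm (by norm_num)
    have h2 := key_l2 _ (hf.continuous_iteratedDeriv t (by exact_mod_cast le_refl t))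
    have h3 : (∫ x in (0:ℝ)..1, ‖iteratedDeriv t f x‖^2) ≤ hsNormSq t f := by
      unfold hsNormSq
      linarith
    exact h1.trans (h2.trans (Real.sqrt_le_sqrt h3))

lemma Ik_top_bound {k : ℤ} (s : ℕ) (f : ℝ → ℂ) (hf : ContDiff ℝ s f) :
    ‖Ik k (iteratedDeriv s f)‖ ≤ Real.sqrt (hsNormSq s f) := by
  have hcont : Continuous (iteratedDeriv s f) :=
    hf.continuous_iteratedDeriv s (by exact_mod_cast le_refl s)
  have h1 : ‖Ik k (iteratedDeriv s f)‖
      ≤ ∫ x in (0:ℝ)..1, ‖iteratedDeriv s f x * Complex.exp (-(cc k * (x:ℂ)))‖ := by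
    rw [Ik_eq]
    exact intervalIntegral.norm_integral_le_integral_norm (by norm_num)
  have h2 : (∫ x in (0:ℝ)..1, ‖iteratedDeriv s f x * Complex.exp (-(cc k * (x:ℂ)))‖)
      = ∫ x in (0:ℝ)..1, ‖iteratedDeriv s f x‖ := by
    apply intervalIntegral.integral_congr
    intro x _
    dsimp only
    rw [norm_mul, norm_e, mul_one]
  have h3 := key_l2 _ hcont
  have h4 : (∫ x in (0:ℝ)..1, ‖iteratedDeriv s f x‖^2) ≤ hsNormSq s f := by
    unfold hsNormSq
    have : 0 ≤ ∑ ℓ ∈ Finset.range s, ‖∫ x in (0:ℝ)..1, iteratedDeriv ℓ f x‖^2 :=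
      Finset.sum_nonneg (fun i _ => sq_nonneg _)
    linarith
  rw [h2] at h1
  exact h1.trans (h3.trans (Real.sqrt_le_sqrt h4))

/-- For `f ∈ Hˢ`, `k ≠ 0`, `1 ≤ j ≤ s`:
`|I_k(f) - I_k(p_{f,j})| ≤ ‖f‖_{Hˢ}/(2π|k|)ʲ`, where
`I_k(p_{f,j}) = -∑_{ℓ<j}(f⁽ℓ⁾(1)-f⁽ℓ⁾(0))/(2πik)^{ℓ+1}`. -/
theorem stmt_16 (s : ℕ) (hs : 1 ≤ s) (j : ℕ) (hj1 : 1 ≤ j) (hjs : j ≤ s)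
    (k : ℤ) (hk : k ≠ 0) (f : ℝ → ℂ) (hf : ContDiff ℝ s f) :
    ‖Ik k f - Ik k (periodization f j)‖
        ≤ Real.sqrt (hsNormSq s f) / (2 * Real.pi * |(k : ℝ)|)^j ∧
    Ik k (periodization f j) = -∑ ℓ ∈ Finset.range j,
        (iteratedDeriv ℓ f 1 - iteratedDeriv ℓ f 0) /
          (2 * Real.pi * Complex.I * (k : ℂ))^(ℓ+1) := by
  have hIp := Ik_periodization hk f j
  refine ⟨?_, hIp⟩
  have e2 := iterate_ibp hk s f hf
  have hdiff : Ik k f - Ik k (periodization f j)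
      = -(∑ ℓ ∈ Finset.Ico j s,
          (iteratedDeriv ℓ f 1 - iteratedDeriv ℓ f 0) / cc k ^ (ℓ+1))
        + Ik k (iteratedDeriv s f) / cc k ^ s := by
    rw [e2, hIp]
    rw [Finset.range_eq_Ico, ← Finset.sum_Ico_consecutive _ (Nat.zero_le j) hjs,
      ← Finset.range_eq_Ico]
    ring
  rw [hdiff]
  set K := 2 * Real.pi * |(k : ℝ)| with hK
  have hk1 : (1:ℝ) ≤ |(k:ℝ)| := by
    rw [← Int.cast_abs]
    exact_mod_cast Int.one_le_abs hk
  have hKpos : 0 < K := by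
    rw [hK]; positivity
  have hK2 : 2 ≤ K := by
    have := Real.pi_gt_three
    rw [hK]
    nlinarith
  have hr0 : 0 ≤ K⁻¹ := inv_nonneg.mpr hKpos.le
  have hr : K⁻¹ ≤ 1/2 := by
    rw [inv_le_comm₀ hKpos (by norm_num)]
    linarith
  set M := Real.sqrt (hsNormSq s f) with hM
  have hM0 : 0 ≤ M := Real.sqrt_nonneg _
  have hccnorm : ∀ n : ℕ, ‖cc k ^ n‖ = K ^ n := by
    intro n
    rw [norm_pow, norm_cc]
  have hΔ : ∀ ℓ ∈ Finset.Ico j s,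
      ‖iteratedDeriv ℓ f 1 - iteratedDeriv ℓ f 0‖ ≤ M := by
    intro ℓ hℓ
    rw [Finset.mem_Ico] at hℓ
    rw [delta_eq f hf ℓ hℓ.2]
    exact int_deriv_bound f hf (ℓ+1) hℓ.2
  calc ‖-(∑ ℓ ∈ Finset.Ico j s,
          (iteratedDeriv ℓ f 1 - iteratedDeriv ℓ f 0) / cc k ^ (ℓ+1))
        + Ik k (iteratedDeriv s f) / cc k ^ s‖
      ≤ ‖∑ ℓ ∈ Finset.Ico j s,
          (iteratedDeriv ℓ f 1 - iteratedDeriv ℓ f 0) / cc k ^ (ℓ+1)‖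
        + ‖Ik k (iteratedDeriv s f) / cc k ^ s‖ := by
        rw [← norm_neg (∑ ℓ ∈ Finset.Ico j s, _)]
        exact norm_add_le _ _
    _ ≤ (∑ ℓ ∈ Finset.Ico j s, M * (K⁻¹)^(ℓ+1)) + M * (K⁻¹)^s := by
        gcongr
        · calc ‖∑ ℓ ∈ Finset.Ico j s,
              (iteratedDeriv ℓ f 1 - iteratedDeriv ℓ f 0) / cc k ^ (ℓ+1)‖
              ≤ ∑ ℓ ∈ Finset.Ico j s,
                ‖(iteratedDeriv ℓ f 1 - iteratedDeriv ℓ f 0) / cc k ^ (ℓ+1)‖ :=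
                norm_sum_le _ _
            _ ≤ ∑ ℓ ∈ Finset.Ico j s, M * (K⁻¹)^(ℓ+1) := by
                apply Finset.sum_le_sum
                intro ℓ hℓ
                rw [norm_div, hccnorm, div_eq_mul_inv, ← inv_pow]
                exact mul_le_mul_of_nonneg_right (hΔ ℓ hℓ) (pow_nonneg hr0 _)
        · rw [norm_div, hccnorm, div_eq_mul_inv, ← inv_pow]
          exact mul_le_mul_of_nonneg_right (Ik_top_bound s f hf) (pow_nonneg hr0 _)
    _ = M * ((∑ ℓ ∈ Finset.Ico j s, (K⁻¹)^(ℓ+1)) + (K⁻¹)^s) := by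
        rw [mul_add, Finset.mul_sum]
    _ ≤ M * (K⁻¹)^j := mul_le_mul_of_nonneg_left (geom_bound _ hr0 hr j s hjs) hM0
    _ = M / K^j := by rw [div_eq_mul_inv, inv_pow]
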